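/- If n ≥ 12 is a highly composite number with largest prime factor p ≥ 13 and largest exponent α_1 (the exponent of 2 in n), then p > α_1 + 1. -/

import Mathlib

/-- `d n`: number of positive divisors of `n`. -/
def d (n : ℕ) : ℕ := (Nat.divisors n).card

/-- A positive integer `n` is highly composite if every smaller positive
integer has strictly fewer divisors. -/
def HighlyComposite (n : ℕ) : Prop :=
  0 < n ∧ ∀ m : ℕ, 0 < m → m < n → d m < d n

lemma d_prime_pow {p : ℕ} (hp : p.Prime) (k : ℕ) : d (p ^ k) = k + 1 := by
  unfold d
  rw [Nat.divisors_prime_pow hp, Finset.card_map, Finset.card_range]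

lemma two_pow_ge (k : ℕ) (hk : 4 ≤ k) : 2 * k + 5 ≤ 2 ^ k := by
  induction k with
  | zero => omega
  | succ m ih =>
    rcases Nat.lt_or_ge m 4 with h | h
    · interval_cases m <;> simp_all <;> omega
    · have := ih h
      have : 2 ^ m ≥ 2 := Nat.one_lt_two_pow (by omega)
      omega

lemma log_bound {p : ℕ} (h13 : 13 ≤ p) : 2 * Nat.log 2 p + 5 ≤ p := by
  set k := Nat.log 2 p with hk
  have hpk : 2 ^ k ≤ p := Nat.pow_log_le_self 2 (by omega)
  rcases Nat.lt_or_ge k 4 with h | h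
  · omega
  · exact le_trans (two_pow_ge k h) hpk

set_option maxHeartbeats 1000000 in
/-- If n ≥ 12 is highly composite with largest prime factor p ≥ 13 and
2-exponent α₁, then p > α₁ + 1. -/
theorem stmt_9 (n : ℕ) (h12 : 12 ≤ n) (hn : HighlyComposite n)
    (p : ℕ) (hp : p.Prime) (hpdvd : p ∣ n)
    (hmax : ∀ q : ℕ, q.Prime → q ∣ n → q ≤ p) (h13 : 13 ≤ p) :
    n.factorization 2 + 1 < p := by
  by_contra hcon
  push_neg at hcon
  set α := n.factorization 2 with hα
  have hn0 : n ≠ 0 := by omega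
  -- Bertrand: a prime q with p < q ≤ 2p
  obtain ⟨q, hq, hpq, hq2p⟩ := Nat.exists_prime_lt_and_le_two_mul p (by omega)
  -- a := log2 q + 1, so q < 2^a
  set a := Nat.log 2 q + 1 with ha
  have hq0 : q ≠ 0 := hq.ne_zero
  have hqa : q < 2 ^ a := Nat.lt_pow_succ_log_self (by norm_num) q
  -- bound: 2a ≤ α with room to spare: 2a + 1 ≤ p ≤ α + 1
  have hlogq : Nat.log 2 q ≤ Nat.log 2 (2 * p) := Nat.log_mono_right hq2p
  have hlog2p : Nat.log 2 (2 * p) = Nat.log 2 p + 1 := by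
    rw [mul_comm, Nat.log_mul_base (by norm_num) (by omega)]
  have hbound : 2 * a + 1 ≤ p := by
    have := log_bound h13
    omega
  have h2a : 2 * a ≤ α := by omega
  have haα : a ≤ α := by omega
  -- t := odd part of n
  have h2dvd : 2 ^ α ∣ n := Nat.ordProj_dvd n 2
  set t := n / 2 ^ α with ht
  have hnt : n = 2 ^ α * t := (Nat.mul_div_cancel' h2dvd).symm
  have ht0 : t ≠ 0 := by
    intro h; rw [h, mul_zero] at hnt; omega
  have htodd : ¬ 2 ∣ t := Nat.not_dvd_ordCompl Nat.prime_two hn0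
  -- q does not divide n
  have hqn : ¬ q ∣ n := fun h => absurd (hmax q hq h) (by omega)
  have hqt : ¬ q ∣ t := fun h => hqn (h.trans ⟨2 ^ α, by rw [hnt]; ring⟩)
  -- the competitor m
  set m := 2 ^ (α - a) * t * q with hm
  have hm0 : 0 < m := by
    have := hq.pos
    positivity
  have hmn : m < n := by
    calc m < 2 ^ (α - a) * t * 2 ^ a := by
          have hX : 0 < 2 ^ (α - a) * t := by positivity
          exact mul_lt_mul_of_pos_left hqa hX
      _ = n := by
          rw [hnt, mul_right_comm, ← pow_add, Nat.sub_add_cancel haα]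
  -- coprimality facts
  have hcop2t : Nat.Coprime 2 t := (Nat.Prime.coprime_iff_not_dvd Nat.prime_two).mpr htodd
  have hcop1 : (2 ^ (α - a)).Coprime t := hcop2t.pow_left _
  have hqnot : ¬ q ∣ 2 ^ (α - a) * t := by
    intro h
    rcases (Nat.Prime.dvd_mul hq).mp h with h' | h'
    · have hq2 : q ∣ 2 := hq.dvd_of_dvd_pow h'
      have := (Nat.prime_dvd_prime_iff_eq hq Nat.prime_two).mp hq2
      omega
    · exact hqt h'
  have hcop2 : (2 ^ (α - a) * t).Coprime q :=
    ((Nat.Prime.coprime_iff_not_dvd hq).mpr hqnot).symm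
  -- divisor counts
  have hdn : d n = (α + 1) * d t := by
    rw [hnt]
    unfold d
    rw [Nat.Coprime.card_divisors_mul (hcop2t.pow_left _)]
    rw [show ((2:ℕ) ^ α).divisors.card = α + 1 from d_prime_pow Nat.prime_two α]
  have hdq : d q = 2 := by
    have := d_prime_pow hq 1
    simpa using this
  have hdm : d m = (α - a + 1) * d t * 2 := by
    rw [hm]
    unfold d
    rw [Nat.Coprime.card_divisors_mul hcop2, Nat.Coprime.card_divisors_mul hcop1]
    rw [show ((2:ℕ) ^ (α - a)).divisors.card = α - a + 1 from d_prime_pow Nat.prime_two _]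
    rw [show q.divisors.card = 2 from hdq]
  have hdt : 0 < d t := by
    unfold d
    rw [Finset.card_pos, Nat.nonempty_divisors]
    exact ht0
  have hlt := hn.2 m hm0 hmn
  rw [hdm, hdn] at hlt
  obtain ⟨k, hk⟩ : ∃ k, α = a + k := ⟨α - a, by omega⟩
  have hka : α - a = k := by omega
  rw [hka] at hlt
  have hkey : (a + k + 1) * d t ≤ (k + 1) * 2 * d t :=
    Nat.mul_le_mul (by omega) (le_refl (d t))
  nlinarith [hlt, hdt, hkey]
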